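/- Let n ≥ 3. For every permutation p of {1,…,n}, the entry p_{n−1} has two children in the minmax tree T^m_p if and only if the entry p_{n−2} is a leaf of T^m_p. -/

import Mathlib

/-- Binary trees with natural-number labels, used to model minmax trees of
permutations. -/
inductive BTree where
  | nil : BTree
  | node : ℕ → BTree → BTree → BTree
deriving DecidableEq, Repr

namespace BTree

/-- The label of the root (if any). -/
def rootVal : BTree → Option ℕ
  | .nil => none
  | .node v _ _ => some v

/-- Whether the value `x` occurs as a label in the tree. -/
def memB : BTree → ℕ → Bool
  | .nil, _ => false
  | .node v l r, x => (x == v) || memB l x || memB r x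

/-- The number of children of the (unique, for permutations) node labelled `x`. -/
def numChildren : BTree → ℕ → ℕ
  | .nil, _ => 0
  | .node v l r, x =>
      if x = v then (if l = .nil then 0 else 1) + (if r = .nil then 0 else 1)
      else numChildren l x + numChildren r x

/-- `x` is a leaf of the tree: it occurs in the tree and has no children. -/
def IsLeaf (t : BTree) (x : ℕ) : Prop := t.memB x = true ∧ t.numChildren x = 0

instance (t : BTree) (x : ℕ) : Decidable (t.IsLeaf x) := by unfold IsLeaf; infer_instance

/-- `childB t x y = true` iff `x` is a child of `y` in `t`, i.e. `x` is the root of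
the left or the right subtree hanging from `y`. -/
def childB : BTree → ℕ → ℕ → Bool
  | .nil, _, _ => false
  | .node v l r, x, y =>
      ((y == v) && (l.rootVal == some x || r.rootVal == some x))
      || childB l x y || childB r x y

/-- `ancB t x y = true` iff `x` is a (strict) ancestor of `y` in `t`, i.e. `y` lies
in a subtree hanging from `x`. -/
def ancB : BTree → ℕ → ℕ → Bool
  | .nil, _, _ => false
  | .node v l r, x, y =>
      ((x == v) && (memB l y || memB r y)) || ancB l x y || ancB r x y

end BTree

/-- `x` is the leftmost-eligible extreme letter of `l`: the minimum or the maximum. -/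
def isExtreme (l : List ℕ) (x : ℕ) : Bool :=
  (l.min? == some x) || (l.max? == some x)

/-- Fuelled construction of the minmax tree of a list of distinct naturals:
split the list as `u ++ [m] ++ v` where `m` is the leftmost of the minimum and
maximum letters, put `m` at the root and recurse on `u` (left) and `v` (right). -/
def mmAux : ℕ → List ℕ → BTree
  | 0, _ => .nil
  | fuel+1, l =>
    if l.isEmpty then .nil
    else
      let k := l.findIdx (isExtreme l)
      .node (l.getD k 0) (mmAux fuel (l.take k)) (mmAux fuel (l.drop (k+1)))

/-- The minmax tree `T^m_p` of a word `l` (with distinct letters). -/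
def minmaxTree (l : List ℕ) : BTree := mmAux l.length l

/-- The word `p_1 p_2 … p_n` on the letters `{1,…,n}` associated to a permutation
`p` of `Fin n`. -/
def permList (n : ℕ) (p : Equiv.Perm (Fin n)) : List ℕ :=
  List.ofFn (fun i => (p i : ℕ) + 1)

/-- The `i`-th entry `p_i` (1-indexed) of the permutation `p`. -/
def entryAt (n : ℕ) (p : Equiv.Perm (Fin n)) (i : ℕ) : ℕ :=
  (permList n p).getD (i - 1) 0


section MMProofs
open List BTree

lemma getElem_idx_congr {l : List ℕ} {i j : ℕ} (h : i = j) {hi : i < l.length}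
    {hj : j < l.length} : l[i] = l[j] := by subst h; rfl

lemma mem_drop_of_idx {l : List ℕ} {j i : ℕ} (hj : j ≤ i) (hi : i < l.length) :
    l[i] ∈ l.drop j := by
  have h' : (l.drop j)[i - j]'(by simp; omega) = l[i] := by
    rw [List.getElem_drop]; exact getElem_idx_congr (by omega)
  exact h' ▸ List.getElem_mem _

lemma mem_take_of_idx {l : List ℕ} {j i : ℕ} (hj : i < j) (hi : i < l.length) :
    l[i] ∈ l.take j := by
  have h' : (l.take j)[i]'(by simp; omega) = l[i] := List.getElem_take
  exact h' ▸ List.getElem_mem _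

lemma mmAux_nil (f : ℕ) : mmAux f [] = .nil := by cases f <;> simp [mmAux]

lemma mmAux_unfold {l : List ℕ} (h : l ≠ []) (f : ℕ) :
    mmAux (f+1) l = .node (l.getD (l.findIdx (isExtreme l)) 0)
      (mmAux f (l.take (l.findIdx (isExtreme l))))
      (mmAux f (l.drop (l.findIdx (isExtreme l) + 1))) := by
  simp [mmAux, h]

lemma extreme_exists {l : List ℕ} (h : l ≠ []) : ∃ x ∈ l, isExtreme l x = true := by
  cases hm : l.min? with
  | none => exact absurd (List.min?_eq_none_iff.mp hm) h
  | some m =>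
    refine ⟨m, ((List.min?_eq_some_iff').mp hm).1, ?_⟩
    simp [isExtreme, hm]

lemma findIdx_lt {l : List ℕ} (h : l ≠ []) : l.findIdx (isExtreme l) < l.length :=
  List.findIdx_lt_length_of_exists (extreme_exists h)

lemma findIdx_lt_pred {l : List ℕ} (hd : l.Nodup) (h2 : 2 ≤ l.length) :
    l.findIdx (isExtreme l) < l.length - 1 := by
  have hne : l ≠ [] := by intro h; simp [h] at h2
  by_contra hcon
  push_neg at hcon
  cases hm : l.min? with
  | none => exact absurd (List.min?_eq_none_iff.mp hm) hne
  | some m =>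
  cases hM : l.max? with
  | none => exact absurd (List.max?_eq_none_iff.mp hM) hne
  | some M =>
  obtain ⟨hmmem, hmle⟩ := (List.min?_eq_some_iff').mp hm
  obtain ⟨hMmem, hMle⟩ := (List.max?_eq_some_iff').mp hM
  obtain ⟨i, hi, hli⟩ := List.getElem_of_mem hmmem
  obtain ⟨j, hj, hlj⟩ := List.getElem_of_mem hMmem
  have hmM : m ≠ M := by
    intro hEq
    have h0 : l[0]'(by omega) ∈ l := List.getElem_mem _
    have h1 : l[1]'(by omega) ∈ l := List.getElem_mem _
    have e0 : l[0]'(by omega) = m := le_antisymm (hEq ▸ hMle _ h0) (hmle _ h0)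
    have e1 : l[1]'(by omega) = m := le_antisymm (hEq ▸ hMle _ h1) (hmle _ h1)
    have : (0 : ℕ) = 1 := hd.getElem_inj_iff.mp (e0.trans e1.symm)
    omega
  have hij : i ≠ j := by
    intro hEq; subst hEq; exact hmM (hli.symm.trans hlj)
  have exti : isExtreme l l[i] = true := by simp [isExtreme, hm, hli]
  have extj : isExtreme l l[j] = true := by simp [isExtreme, hM, hlj]
  have hi' : ¬ i < l.findIdx (isExtreme l) := fun hlt => by
    simp [List.not_of_lt_findIdx hlt] at exti
  have hj' : ¬ j < l.findIdx (isExtreme l) := fun hlt => by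
    simp [List.not_of_lt_findIdx hlt] at extj
  omega

lemma mem_of_memB : ∀ (f : ℕ) (l : List ℕ) (x : ℕ), (mmAux f l).memB x = true → x ∈ l := by
  intro f
  induction f with
  | zero => intro l x h; simp [mmAux, BTree.memB] at h
  | succ f ih =>
    intro l x h
    by_cases hl : l = []
    · subst hl; simp [mmAux, BTree.memB] at h
    · rw [mmAux_unfold hl] at h
      have hk := findIdx_lt hl
      rw [List.getD_eq_getElem l 0 hk] at h
      simp only [BTree.memB, Bool.or_eq_true, beq_iff_eq] at h
      rcases h with (h | h) | h
      · exact h ▸ List.getElem_mem _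
      · exact (List.take_sublist _ _).mem (ih _ _ h)
      · exact (List.drop_sublist _ _).mem (ih _ _ h)

lemma memB_false_of_not_mem {f : ℕ} {l : List ℕ} {x : ℕ} (h : x ∉ l) :
    (mmAux f l).memB x = false := by
  by_contra hc
  exact h (mem_of_memB f l x (by simpa using hc))

lemma numChildren_zero_of_not_mem : ∀ (f : ℕ) (l : List ℕ) (x : ℕ), x ∉ l →
    (mmAux f l).numChildren x = 0 := by
  intro f
  induction f with
  | zero => intro l x _; simp [mmAux, BTree.numChildren]
  | succ f ih =>
    intro l x h
    by_cases hl : l = []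
    · subst hl; simp [mmAux, BTree.numChildren]
    · rw [mmAux_unfold hl]
      have hk := findIdx_lt hl
      rw [List.getD_eq_getElem l 0 hk]
      have hxv : x ≠ l[l.findIdx (isExtreme l)] := by
        intro hEq; exact h (hEq ▸ List.getElem_mem _)
      simp only [BTree.numChildren, if_neg hxv]
      rw [ih _ _ (fun hm => h ((List.take_sublist _ _).mem hm)),
          ih _ _ (fun hm => h ((List.drop_sublist _ _).mem hm))]

lemma not_mem_take_of_mem_drop {l : List ℕ} (hd : l.Nodup) {k j x : ℕ}
    (hkj : k ≤ j) (hx : x ∈ l.drop j) : x ∉ l.take k := by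
  intro hxt
  have hx' : x ∈ l.drop k := by
    have h1 : l.drop j = (l.drop k).drop (j - k) := by
      rw [List.drop_drop]; congr 1; omega
    exact (List.drop_sublist _ _).mem (h1 ▸ hx)
  have hdisj : (l.take k).Disjoint (l.drop k) := by
    apply List.disjoint_of_nodup_append
    rw [List.take_append_drop]; exact hd
  exact hdisj hxt hx'

lemma mmAux_ne_nil {l : List ℕ} (h : l ≠ []) {f : ℕ} (hf : 1 ≤ f) : mmAux f l ≠ .nil := by
  obtain ⟨g, rfl⟩ : ∃ g, f = g + 1 := ⟨f - 1, by omega⟩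
  rw [mmAux_unfold h]
  simp

lemma mmAux_pair {a c : ℕ} (h : a ≠ c) {f : ℕ} (hf : 2 ≤ f) :
    mmAux f [a, c] = .node a .nil (.node c .nil .nil) := by
  obtain ⟨g, rfl⟩ : ∃ g, f = g + 2 := ⟨f - 2, by omega⟩
  have hext : isExtreme [a, c] a = true := by
    rcases h.lt_or_gt with h' | h' <;>
      simp [isExtreme, List.min?, List.max?, Nat.min_def, Nat.max_def, h'.le, Nat.not_le.mpr h']
  have hk : [a, c].findIdx (isExtreme [a, c]) = 0 := by
    rw [List.findIdx_cons, hext]; simp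
  rw [mmAux_unfold (by simp), hk]
  simp only [List.take, List.drop, List.getD]
  rw [mmAux_nil, mmAux_unfold (l := [c]) (by simp)]
  have hk2 : [c].findIdx (isExtreme [c]) = 0 := by
    have h1 : isExtreme [c] c = true := by simp [isExtreme, List.min?]
    rw [List.findIdx_cons, h1]; simp
  rw [hk2]
  simp [mmAux_nil]

lemma isLeaf_node_right {v : ℕ} {L R : BTree} {x : ℕ} (hv : x ≠ v)
    (hL1 : L.memB x = false) (hLn : L.numChildren x = 0) :
    (BTree.node v L R).IsLeaf x ↔ R.IsLeaf x := by
  simp [BTree.IsLeaf, BTree.memB, BTree.numChildren, hv, hL1, hLn]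

lemma isLeaf_node_left {v : ℕ} {L R : BTree} {x : ℕ} (hv : x ≠ v)
    (hR1 : R.memB x = false) (hRn : R.numChildren x = 0) :
    (BTree.node v L R).IsLeaf x ↔ L.IsLeaf x := by
  simp [BTree.IsLeaf, BTree.memB, BTree.numChildren, hv, hR1, hRn]

lemma isLeaf_last : ∀ (f : ℕ) (l : List ℕ), l ≠ [] → l.length ≤ f → l.Nodup →
    (mmAux f l).IsLeaf (l.getD (l.length - 1) 0) := by
  intro f
  induction f with
  | zero => intro l h hf _; simp [List.length_eq_zero_iff.mp (Nat.le_zero.mp hf)] at h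
  | succ f ih =>
    intro l h hf hd
    have hlen1 : 1 ≤ l.length := List.length_pos_iff.mpr h
    rw [mmAux_unfold h]
    have hk := findIdx_lt h
    set k := l.findIdx (isExtreme l) with hkdef
    rw [List.getD_eq_getElem l 0 hk, List.getD_eq_getElem l 0 (by omega)]
    rcases Nat.lt_or_ge l.length 2 with h2 | h2
    · -- length = 1
      have hl1 : l.length = 1 := by omega
      have hk0 : k = 0 := by omega
      have hdrop : l.drop (k + 1) = [] := by
        rw [hk0]; exact List.drop_eq_nil_of_le (by omega)
      have htake : l.take k = [] := by rw [hk0]; simp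
      rw [hdrop, htake, mmAux_nil]
      have hidx : l[l.length - 1]'(by omega) = l[k] := getElem_idx_congr (by omega)
      rw [hidx]
      exact ⟨by simp [BTree.memB], by simp [BTree.numChildren]⟩
    · -- length ≥ 2
      have hk' : k < l.length - 1 := findIdx_lt_pred hd h2
      have hdlen : (l.drop (k+1)).length = l.length - (k+1) := by simp
      have hdne : l.drop (k+1) ≠ [] := by
        intro hc; rw [hc] at hdlen; simp at hdlen; omega
      have hIH := ih (l.drop (k+1)) hdne (by omega) (hd.sublist (List.drop_sublist _ _))
      have hlast : (l.drop (k+1)).getD ((l.drop (k+1)).length - 1) 0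
          = l[l.length - 1]'(by omega) := by
        rw [List.getD_eq_getElem _ 0 (by omega), List.getElem_drop]
        exact getElem_idx_congr (by omega)
      rw [hlast] at hIH
      have hxv : l[l.length - 1]'(by omega) ≠ l[k] := by
        intro hEq
        have := hd.getElem_inj_iff.mp hEq
        omega
      have hxmem : l[l.length - 1]'(by omega) ∈ l.drop (k+1) :=
        mem_drop_of_idx (by omega) (by omega)
      have hnt : l[l.length - 1]'(by omega) ∉ l.take k :=
        not_mem_take_of_mem_drop hd (by omega) hxmem
      constructor
      · simp only [BTree.memB, Bool.or_eq_true, beq_iff_eq]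
        right; exact hIH.1
      · simp only [BTree.numChildren, if_neg hxv]
        rw [numChildren_zero_of_not_mem _ _ _ hnt, hIH.2]

lemma key : ∀ (f : ℕ) (l : List ℕ), l.length ≤ f → 3 ≤ l.length → l.Nodup →
    ((mmAux f l).numChildren (l.getD (l.length - 2) 0) = 2 ↔
      (mmAux f l).IsLeaf (l.getD (l.length - 3) 0)) := by
  intro f
  induction f with
  | zero => intro l hf h3 _; omega
  | succ f ih =>
    intro l hf h3 hd
    have hne : l ≠ [] := by intro hc; rw [hc] at h3; simp at h3
    rw [mmAux_unfold hne]
    have hkn := findIdx_lt hne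
    have hk := findIdx_lt_pred hd (by omega)
    set k := l.findIdx (isExtreme l) with hkdef
    rw [List.getD_eq_getElem l 0 hkn,
        List.getD_eq_getElem l 0 (show l.length - 2 < l.length by omega),
        List.getD_eq_getElem l 0 (show l.length - 3 < l.length by omega)]
    rcases Nat.lt_trichotomy k (l.length - 3) with hcase | hcase | hcase
    · -- k < length - 3 : recurse into the right subtree
      have hdlen : (l.drop (k+1)).length = l.length - (k+1) := by simp
      have hr3 : 3 ≤ (l.drop (k+1)).length := by omega
      have hIH := ih (l.drop (k+1)) (by omega) hr3 (hd.sublist (List.drop_sublist _ _))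
      have ha : (l.drop (k+1)).getD ((l.drop (k+1)).length - 2) 0
          = l[l.length - 2]'(by omega) := by
        rw [List.getD_eq_getElem _ 0 (by omega), List.getElem_drop]
        exact getElem_idx_congr (by omega)
      have hb : (l.drop (k+1)).getD ((l.drop (k+1)).length - 3) 0
          = l[l.length - 3]'(by omega) := by
        have hlt : (l.drop (k+1)).length - 3 < (l.drop (k+1)).length := by omega
        exact (List.getD_eq_getElem _ 0 hlt).trans
          ((List.getElem_drop).trans (getElem_idx_congr (by omega)))
      rw [ha, hb] at hIH
      have hamem : l[l.length - 2]'(by omega) ∈ l.drop (k+1) :=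
        mem_drop_of_idx (by omega) (by omega)
      have hbmem : l[l.length - 3]'(by omega) ∈ l.drop (k+1) :=
        mem_drop_of_idx (by omega) (by omega)
      have hant : l[l.length - 2]'(by omega) ∉ l.take k :=
        not_mem_take_of_mem_drop hd (by omega) hamem
      have hbnt : l[l.length - 3]'(by omega) ∉ l.take k :=
        not_mem_take_of_mem_drop hd (by omega) hbmem
      have havk : l[l.length - 2]'(by omega) ≠ l[k] := by
        intro hEq; have := hd.getElem_inj_iff.mp hEq; omega
      have hbvk : l[l.length - 3]'(by omega) ≠ l[k] := by
        intro hEq; have := hd.getElem_inj_iff.mp hEq; omega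
      rw [isLeaf_node_right hbvk (memB_false_of_not_mem hbnt)
            (numChildren_zero_of_not_mem _ _ _ hbnt)]
      simp only [BTree.numChildren, if_neg havk,
        numChildren_zero_of_not_mem _ _ _ hant, Nat.zero_add]
      exact hIH
    · -- k = length - 3 : both sides false
      have hdrop : l.drop (k + 1) = [l[l.length - 2]'(by omega), l[l.length - 1]'(by omega)] := by
        apply List.ext_getElem
        · simp; omega
        · intro i h1 h2
          rw [List.getElem_drop]
          match i with
          | 0 => exact getElem_idx_congr (by omega)
          | 1 => exact getElem_idx_congr (by omega)
          | (j+2) => simp at h2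
      have hac : l[l.length - 2]'(by omega) ≠ l[l.length - 1]'(by omega) := by
        intro hEq; have := hd.getElem_inj_iff.mp hEq; omega
      rw [hdrop, mmAux_pair hac (show 2 ≤ f by omega)]
      have hbv : l[l.length - 3]'(by omega) = l[k] := getElem_idx_congr (by omega)
      have hav' : l[l.length - 2]'(by omega) ≠ l[k] := by
        intro hEq; have := hd.getElem_inj_iff.mp hEq; omega
      have hant : l[l.length - 2]'(by omega) ∉ l.take k :=
        not_mem_take_of_mem_drop hd (by omega : k ≤ k + 1)
          (by rw [hdrop]; exact List.mem_cons_self)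
      constructor
      · intro hL
        exfalso
        simp only [BTree.numChildren, if_neg hav',
          numChildren_zero_of_not_mem _ _ _ hant, if_pos rfl] at hL
        simp at hL
      · intro hR
        exfalso
        have h2' := hR.2
        rw [hbv] at h2'
        by_cases hLnil : mmAux f (l.take k) = .nil <;>
          simp [BTree.numChildren, hLnil] at h2'
    · -- k = length - 2 : both sides true
      have hkval : k = l.length - 2 := by omega
      have hdne : l.drop (k + 1) ≠ [] := by
        intro hc
        have h' := congrArg List.length hc
        simp only [List.length_drop, List.length_nil] at h'
        omega
      have htne : l.take k ≠ [] := by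
        intro hc
        have h' := congrArg List.length hc
        simp only [List.length_take, List.length_nil] at h'
        omega
      have hLnn := mmAux_ne_nil htne (show 1 ≤ f by omega)
      have hRnn := mmAux_ne_nil hdne (show 1 ≤ f by omega)
      have hva : l[k] = l[l.length - 2]'(by omega) := getElem_idx_congr (by omega)
      have hbv : l[l.length - 3]'(by omega) ≠ l[k] := by
        intro hEq; have := hd.getElem_inj_iff.mp hEq; omega
      constructor
      · intro _
        have htlen : (l.take k).length = k := by simp; omega
        have hleaf := isLeaf_last f (l.take k) htne (by omega)
          (hd.sublist (List.take_sublist _ _))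
        have hbt : (l.take k).getD ((l.take k).length - 1) 0 = l[l.length - 3]'(by omega) := by
          rw [List.getD_eq_getElem _ 0 (by omega), List.getElem_take]
          exact getElem_idx_congr (by omega)
        rw [hbt] at hleaf
        have hbmem : l[l.length - 3]'(by omega) ∈ l.take k :=
          mem_take_of_idx (by omega) (by omega)
        have hbnd : l[l.length - 3]'(by omega) ∉ l.drop (k+1) := by
          intro hc
          exact (not_mem_take_of_mem_drop hd (by omega : k ≤ k+1) hc) hbmem
        rw [isLeaf_node_left hbv (memB_false_of_not_mem hbnd)
          (numChildren_zero_of_not_mem _ _ _ hbnd)]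
        exact hleaf
      · intro _
        rw [← hva]
        simp [BTree.numChildren, hLnn, hRnn]

end MMProofs

/-- For `n ≥ 3` and every permutation `p` of `{1,…,n}`, the entry
`p_{n-1}` has two children in the minmax tree if and only if `p_{n-2}` is a leaf. -/
theorem penultimate_two_children_iff (n : ℕ) (hn : 3 ≤ n) (p : Equiv.Perm (Fin n)) :
    (minmaxTree (permList n p)).numChildren (entryAt n p (n - 1)) = 2 ↔
      (minmaxTree (permList n p)).IsLeaf (entryAt n p (n - 2)) := by
  set l := permList n p with hldef
  have hlen : l.length = n := by simp [hldef, permList]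
  have hnd : l.Nodup := by
    rw [hldef, permList, List.nodup_ofFn]
    intro i j hij
    simp only [Nat.add_right_cancel_iff] at hij
    exact p.injective (Fin.val_injective hij)
  have h1 : entryAt n p (n - 1) = l.getD (l.length - 2) 0 := by
    rw [entryAt, hlen]; congr 1
  have h2 : entryAt n p (n - 2) = l.getD (l.length - 3) 0 := by
    rw [entryAt, hlen]; congr 1
  rw [h1, h2, minmaxTree]
  exact key l.length l le_rfl (by omega) hnd
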